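/- Let (A_n)_{n≥1} be a sequence of positive real numbers such that A_{n−1}/A_n → 1 as n → ∞. Then (Σ_{i=1}^{n} A_i) / A_n → ∞ as n → ∞. -/

import Mathlib

open Filter

/-- If `(A_n)` is a sequence of positive reals with `A_{n-1} / A_n → 1`, then
`(Σ_{i=1}^n A_i) / A_n → ∞`. -/
theorem sum_div_last_tendsto_atTop (A : ℕ → ℝ)
    (hpos : ∀ n ≥ 1, 0 < A n)
    (hratio : Tendsto (fun n => A (n - 1) / A n) atTop (nhds 1)) :
    Tendsto (fun n => (∑ i ∈ Finset.Icc 1 n, A i) / A n) atTop atTop := by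
  rw [tendsto_atTop]
  intro b
  set b' : ℝ := max b 1 with hb'def
  have hb'1 : (1 : ℝ) ≤ b' := le_max_right _ _
  have hb'0 : (0 : ℝ) < b' := lt_of_lt_of_le one_pos hb'1
  set ε : ℝ := 1 / (2 * b') with hεdef
  have hε0 : 0 < ε := by positivity
  have hε1 : ε ≤ 1 / 2 := by
    rw [hεdef, div_le_div_iff₀ (by positivity) (by norm_num)]
    linarith
  set r : ℝ := 1 - ε with hrdef
  have hr0 : 0 ≤ r := by rw [hrdef]; linarith
  have hr1 : r < 1 := by rw [hrdef]; linarith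
  -- eventually the ratio is at least r
  have hev : ∀ᶠ n in atTop, r ≤ A (n - 1) / A n :=
    hratio.eventually (eventually_ge_nhds hr1)
  obtain ⟨N₀, hN₀⟩ := eventually_atTop.1 hev
  set N : ℕ := max N₀ 1 with hNdef
  have hN1 : 1 ≤ N := le_max_right _ _
  -- main induction: S_{N+k} ≥ ∑_{i<k+1} r^i
  have key : ∀ k : ℕ,
      (∑ i ∈ Finset.range (k + 1), r ^ i) ≤
        (∑ i ∈ Finset.Icc 1 (N + k), A i) / A (N + k) := by
    intro k
    induction k with
    | zero =>
      have hs1 : (∑ i ∈ Finset.range (0 + 1), r ^ i) = 1 := by simp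
      rw [hs1, Nat.add_zero, le_div_iff₀ (hpos N hN1), one_mul]
      have : A N = ∑ i ∈ {N}, A i := by simp
      rw [this]
      apply Finset.sum_le_sum_of_subset_of_nonneg
      · intro x hx
        simp at hx
        simp [hx, hN1]
      · intro i hi _
        exact (hpos i (Finset.mem_Icc.1 hi).1).le
    | succ k ih =>
      have hn1 : 1 ≤ N + (k + 1) := by omega
      have hApos : 0 < A (N + (k + 1)) := hpos _ hn1
      have hApos' : 0 < A (N + k) := hpos _ (by omega)
      have hsplit : (∑ i ∈ Finset.Icc 1 (N + (k + 1)), A i)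
          = (∑ i ∈ Finset.Icc 1 (N + k), A i) + A (N + (k + 1)) := by
        exact Finset.sum_Icc_succ_top (f := A) (a := 1) (b := N + k) (by omega)
      have hratio' : r ≤ A (N + k) / A (N + (k + 1)) := by
        have h := hN₀ (N + (k + 1)) (by omega)
        have he : N + (k + 1) - 1 = N + k := by omega
        rwa [he] at h
      have hgeom_nonneg : 0 ≤ ∑ i ∈ Finset.range (k + 1), r ^ i :=
        Finset.sum_nonneg fun i _ => pow_nonneg hr0 i
      have hstep : (∑ i ∈ Finset.Icc 1 (N + k), A i) / A (N + (k + 1))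
          = ((∑ i ∈ Finset.Icc 1 (N + k), A i) / A (N + k)) * (A (N + k) / A (N + (k + 1))) := by
        field_simp
      have h1 : r * (∑ i ∈ Finset.range (k + 1), r ^ i)
          ≤ (∑ i ∈ Finset.Icc 1 (N + k), A i) / A (N + (k + 1)) := by
        rw [hstep]
        calc r * (∑ i ∈ Finset.range (k + 1), r ^ i)
            = (∑ i ∈ Finset.range (k + 1), r ^ i) * r := mul_comm _ _
          _ ≤ ((∑ i ∈ Finset.Icc 1 (N + k), A i) / A (N + k)) * (A (N + k) / A (N + (k + 1))) := by
              apply mul_le_mul ih hratio' hr0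
              exact le_trans hgeom_nonneg ih
      rw [hsplit, add_div, div_self hApos.ne', geom_sum_succ]
      linarith
  -- partial geometric sums tend to (1 - r)⁻¹ = 2 b' > b
  have hsum : Tendsto (fun m => ∑ i ∈ Finset.range m, r ^ i) atTop (nhds (1 - r)⁻¹) :=
    (hasSum_geometric_of_lt_one hr0 hr1).tendsto_sum_nat
  have hlim : b < (1 - r)⁻¹ := by
    have : (1 - r)⁻¹ = 2 * b' := by
      rw [hrdef, hεdef]
      field_simp
      ring
    rw [this]
    have : b ≤ b' := le_max_left _ _
    linarith
  have hevgeom : ∀ᶠ m in atTop, b ≤ ∑ i ∈ Finset.range m, r ^ i :=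
    hsum.eventually (eventually_ge_nhds hlim)
  obtain ⟨K, hK⟩ := eventually_atTop.1 hevgeom
  refine eventually_atTop.2 ⟨N + K, fun n hn => ?_⟩
  have hnN : N ≤ n := le_trans (Nat.le_add_right N K) hn
  obtain ⟨k, rfl⟩ := Nat.exists_eq_add_of_le hnN
  calc b ≤ ∑ i ∈ Finset.range (k + 1), r ^ i := hK _ (by omega)
    _ ≤ (∑ i ∈ Finset.Icc 1 (N + k), A i) / A (N + k) := key k
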